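/- Let n and b be natural numbers with b even and b ≥ 2. Then the Frobenius number of SF(b,n) is b^((b+1)·b^n) − 1, and the genus of SF(b,n), i.e., the cardinality of ℕ \ SF(b,n), is b^((b+1)·b^n)/2. -/

import Mathlib

open Finset in
lemma sylvester_aux (m A : ℕ) (hm : 2 ≤ m) (hA : 2 ≤ A) (hcop : Nat.Coprime A m) :
    (¬ ∃ k t : ℕ, (m - 1) * (A - 1) - 1 = k * m + t * A) ∧
    (∀ x : ℕ, (m - 1) * (A - 1) ≤ x → ∃ k t : ℕ, x = k * m + t * A) ∧
    2 * Set.ncard {x : ℕ | ¬ ∃ k t : ℕ, x = k * m + t * A} = (m - 1) * (A - 1) := by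
  classical
  set P : ℕ → Prop := fun x => ∃ k t : ℕ, x = k * m + t * A with hP
  set F : ℕ := (m - 1) * (A - 1) - 1 with hF
  have hG1 : 1 ≤ (m - 1) * (A - 1) := Nat.one_le_iff_ne_zero.mpr
    (Nat.mul_ne_zero (by omega) (by omega))
  have hGF : (m - 1) * (A - 1) = F + 1 := by omega
  -- key identity : (m-1)*A = F + m
  have hkey : (m - 1) * A = F + m := by
    have : (m - 1) * A = (m - 1) * (A - 1) + (m - 1) := by
      rw [← Nat.mul_succ]; congr 1; omega
    omega
  obtain ⟨u, -, hu⟩ := Nat.exists_mul_mod_eq_one_of_coprime hcop (by omega)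
  set t : ℕ → ℕ := fun x => x * u % m with ht
  have htlt : ∀ x, t x < m := fun x => Nat.mod_lt _ (by omega)
  have htmod : ∀ x, t x * A ≡ x [MOD m] := by
    intro x
    calc t x * A ≡ x * u * A [MOD m] := ((Nat.mod_modEq (x * u) m)).mul_right A
      _ = x * (A * u) := by ring
      _ ≡ x * 1 [MOD m] := Nat.ModEq.mul_left x ((Nat.mod_modEq (A*u) m).symm.trans (by rw [hu]))
      _ = x := by ring
  have huniq : ∀ s x : ℕ, s * A ≡ x [MOD m] → s % m = t x := by
    intro s x h
    have h2 : s * A ≡ t x * A [MOD m] := h.trans (htmod x).symm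
    have := Nat.ModEq.cancel_right_of_coprime (by simpa [Nat.coprime_comm] using hcop) h2
    have := this.symm
    unfold Nat.ModEq at this
    rw [Nat.mod_eq_of_lt (htlt x)] at this
    omega
  have hchar : ∀ x, P x ↔ t x * A ≤ x := by
    intro x
    constructor
    · rintro ⟨k, s, rfl⟩
      have h1 : s * A ≡ k * m + s * A [MOD m] := by
        have : (0 : ℕ) + s * A ≡ k * m + s * A [MOD m] :=
          Nat.ModEq.add_right _ ((Nat.modEq_zero_iff_dvd).mpr ⟨k, (mul_comm k m)⟩).symm
        simpa using this
      have hs := huniq s _ h1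
      have : t _ ≤ s := hs ▸ Nat.mod_le s m
      calc t (k * m + s * A) * A ≤ s * A := Nat.mul_le_mul_right A this
        _ ≤ k * m + s * A := le_add_self
    · intro h
      obtain ⟨k, hk⟩ := (Nat.modEq_iff_dvd' h).mp (htmod x)
      exact ⟨k, t x, by rw [mul_comm k m]; omega⟩
  have hnchar : ∀ x, ¬ P x ↔ x + m ≤ t x * A := by
    intro x
    rw [hchar, not_le]
    constructor
    · intro h
      obtain ⟨k, hk⟩ := (Nat.modEq_iff_dvd' h.le).mp (htmod x).symm
      have : k ≠ 0 := by rintro rfl; omega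
      have : m ≤ m * k := Nat.le_mul_of_pos_right m (by omega)
      omega
    · omega
  have htub : ∀ x, t x * A ≤ F + m := by
    intro x
    calc t x * A ≤ (m - 1) * A := Nat.mul_le_mul_right A (by have := htlt x; omega)
      _ = F + m := hkey
  have hbig : ∀ x, F < x → P x := by
    intro x hx
    by_contra h
    rw [hnchar] at h
    have := htub x
    omega
  have hsymm : ∀ x, x ≤ F → (P (F - x) ↔ x + m ≤ t x * A) := by
    intro x hx
    have htF : t (F - x) = m - 1 - t x := by
      have h1 : (m - 1 - t x) * A + (t x * A) = (m - 1) * A := by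
        rw [← Nat.add_mul]; congr 1; have := htlt x; omega
      have h2 : (m - 1 - t x) * A + x ≡ (F - x) + x [MOD m] := by
        calc (m - 1 - t x) * A + x ≡ (m - 1 - t x) * A + t x * A [MOD m] :=
              Nat.ModEq.add_left _ (htmod x).symm
          _ = (m - 1) * A := h1
          _ = F + m := hkey
          _ ≡ F [MOD m] := by
              simpa using (Nat.ModEq.add_left F ((Nat.modEq_zero_iff_dvd).mpr dvd_rfl)).symm
          _ = (F - x) + x := by omega
      have h3 := Nat.ModEq.add_right_cancel' x h2
      have := huniq _ _ h3
      rw [Nat.mod_eq_of_lt (by omega : m - 1 - t x < m)] at this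
      omega
    rw [hchar, htF]
    have h1 : (m - 1 - t x) * A + (t x * A) = F + m := by
      rw [← Nat.add_mul]
      have := htlt x
      rw [show m - 1 - t x + t x = m - 1 by omega]
      exact hkey
    constructor
    · intro h; omega
    · intro h; omega
  -- counting
  set Cf : Finset ℕ := (range (F + 1)).filter (fun x => ¬ P x) with hCf
  set Df : Finset ℕ := (range (F + 1)).filter (fun x => P x) with hDf
  have hsub : {x : ℕ | ¬ P x} = ↑Cf := by
    ext x
    simp only [hCf, Set.mem_setOf_eq, coe_filter, mem_range, Set.mem_setOf_eq]
    constructor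
    · intro h
      refine ⟨?_, h⟩
      by_contra hx
      exact h (hbig x (by omega))
    · exact fun h => h.2
  have hcards : Cf.card = Df.card := by
    apply Finset.card_bij' (fun x _ => F - x) (fun x _ => F - x)
    · intro a ha
      simp only [hCf, mem_filter, mem_range] at ha
      simp only [hDf, mem_filter, mem_range]
      refine ⟨by omega, ?_⟩
      rw [hsymm a (by omega)]
      exact (hnchar a).mp ha.2
    · intro a ha
      simp only [hDf, mem_filter, mem_range] at ha
      simp only [hCf, mem_filter, mem_range]
      refine ⟨by omega, ?_⟩
      rw [hnchar]
      have h1 : F - (F - a) = a := by omega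
      have := (hsymm (F - a) (by omega)).mp (by rw [h1]; exact ha.2)
      exact this
    · intro a ha; simp only [hCf, mem_filter, mem_range] at ha; omega
    · intro a ha; simp only [hDf, mem_filter, mem_range] at ha; omega
  have hsum : Df.card + Cf.card = F + 1 := by
    rw [hDf, hCf, Finset.card_filter_add_card_filter_not, Finset.card_range]
  refine ⟨?_, fun x hx => hbig x (by omega), ?_⟩
  · show ¬ P F
    rw [hnchar]
    have htF : t F = m - 1 := by
      have h2 : (m - 1) * A ≡ F [MOD m] := by
        rw [hkey]
        simpa using (Nat.ModEq.add_left F ((Nat.modEq_zero_iff_dvd).mpr dvd_rfl)).symm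
      have := huniq _ _ h2
      rw [Nat.mod_eq_of_lt (by omega : m - 1 < m)] at this
      omega
    rw [htF, hkey]

  · rw [hsub, Set.ncard_coe_finset]
    omega

/-- The Fermat numerical semigroup base `b`: the additive submonoid of ℕ generated by
`{b^(b^(n+i)) + 1 : i ∈ ℕ}`. -/
def fermatSemigroup (b n : ℕ) : AddSubmonoid ℕ :=
  AddSubmonoid.closure {m : ℕ | ∃ i : ℕ, m = b ^ (b ^ (n + i)) + 1}

theorem fermat_frobenius_genus (n b : ℕ) (hb : 2 ≤ b) (hbe : Even b) :
    IsGreatest {m : ℕ | m ∉ fermatSemigroup b n} (b ^ ((b + 1) * b ^ n) - 1) ∧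
    2 * Set.ncard {m : ℕ | m ∉ fermatSemigroup b n} = b ^ ((b + 1) * b ^ n) := by
  classical
  set q : ℕ := b ^ (b ^ n) with hq
  have hbn : 1 ≤ b ^ n := Nat.one_le_pow _ _ (by omega)
  have hq2 : 2 ≤ q := by
    calc 2 ≤ b := hb
      _ = b ^ 1 := (pow_one b).symm
      _ ≤ b ^ (b ^ n) := Nat.pow_le_pow_right (by omega) hbn
  have hqe : Even q := hbe.pow_of_ne_zero (by omega)
  set m : ℕ := q + 1 with hmdef
  set A : ℕ := q ^ b + 1 with hAdef
  have hqb1 : 1 ≤ q ^ b := Nat.one_le_pow _ _ (by omega)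
  have hm : 2 ≤ m := by omega
  have hA : 2 ≤ A := by omega
  have hmodd : Odd m := hqe.add_one
  -- m divides q^e - 1 for even e
  have hdvd : ∀ e : ℕ, Even e → m ∣ q ^ e - 1 := by
    rintro e ⟨c, rfl⟩
    have h1 : q ^ 2 - 1 ∣ q ^ (c + c) - 1 := by
      have := Nat.sub_dvd_pow_sub_pow (q ^ 2) 1 c
      simpa [one_pow, ← pow_mul, two_mul] using this
    have h2 : m ∣ q ^ 2 - 1 := by
      refine ⟨q - 1, ?_⟩
      have hq1 : 1 ≤ q := by omega
      have hqq : 1 ≤ q ^ 2 := Nat.one_le_pow _ _ (by omega)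
      rw [hmdef]
      zify [hq1, hqq]
      ring
    exact h2.trans h1
  have hcop : Nat.Coprime A m := by
    obtain ⟨d, hd⟩ := hdvd b hbe
    have hAeq : A = m * d + 2 := by omega
    have hgcd : Nat.gcd m A = Nat.gcd 2 m := by
      rw [Nat.gcd_rec m A, show A % m = 2 by rw [hAeq, Nat.mul_add_mod, Nat.mod_eq_of_lt (by omega)]]
    exact Nat.coprime_comm.mp (by rw [Nat.Coprime, hgcd]; exact Nat.coprime_two_left.mpr hmodd)
  -- membership characterization
  have hmem : ∀ x, x ∈ fermatSemigroup b n ↔ ∃ k t : ℕ, x = k * m + t * A := by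
    intro x
    constructor
    · intro hx
      induction hx using AddSubmonoid.closure_induction with
      | mem y hy =>
        obtain ⟨i, rfl⟩ := hy
        have hrw : b ^ (b ^ (n + i)) = q ^ (b ^ i) := by
          rw [hq, ← pow_mul, ← pow_add]
        rw [hrw]
        cases i with
        | zero => exact ⟨1, 0, by simp [hmdef]⟩
        | succ j =>
          have hble : b ≤ b ^ (j + 1) := Nat.le_self_pow (by omega) b
          have heve : Even (b ^ (j + 1) - b) := by
            have h : b ^ (j + 1) - b = b * (b ^ j - 1) := by
              rw [Nat.mul_sub, mul_one, ← pow_succ']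
            rw [h]
            exact hbe.mul_right _
          obtain ⟨d, hd⟩ := hdvd _ heve
          refine ⟨q ^ b * d, 1, ?_⟩
          have h1 : q ^ (b ^ (j + 1)) = q ^ b * q ^ (b ^ (j + 1) - b) := by
            rw [← pow_add]
            congr 1
            omega
          have hqe1 : 1 ≤ q ^ (b ^ (j + 1) - b) := Nat.one_le_pow _ _ (by omega)
          rw [h1, show q ^ (b ^ (j + 1) - b) = m * d + 1 by omega]
          ring
      | zero => exact ⟨0, 0, by simp⟩
      | add a c _ _ iha ihc =>
        obtain ⟨k1, t1, h1⟩ := iha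
        obtain ⟨k2, t2, h2⟩ := ihc
        exact ⟨k1 + k2, t1 + t2, by rw [h1, h2]; ring⟩
    · rintro ⟨k, t, rfl⟩
      have hmS : m ∈ fermatSemigroup b n := AddSubmonoid.subset_closure ⟨0, by rw [add_zero]⟩
      have hAS : A ∈ fermatSemigroup b n :=
        AddSubmonoid.subset_closure ⟨1, by rw [hAdef, hq, ← pow_mul, ← pow_succ]⟩
      have h1 : k * m ∈ fermatSemigroup b n := by
        simpa [smul_eq_mul] using nsmul_mem hmS k
      have h2 : t * A ∈ fermatSemigroup b n := by
        simpa [smul_eq_mul] using nsmul_mem hAS t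
      exact add_mem h1 h2
  obtain ⟨hFnot, hbig, hcount⟩ := sylvester_aux m A hm hA hcop
  have hMA : (m - 1) * (A - 1) = b ^ ((b + 1) * b ^ n) := by
    have h1 : (m - 1) * (A - 1) = q * q ^ b := by simp [hmdef, hAdef]
    have h2 : q * q ^ b = q ^ (b + 1) := by rw [pow_succ, mul_comm]
    have h3 : q ^ (b + 1) = b ^ ((b + 1) * b ^ n) := by
      rw [hq, ← pow_mul, mul_comm]
    rw [h1, h2, h3]
  have hset : {x : ℕ | x ∉ fermatSemigroup b n} = {x : ℕ | ¬ ∃ k t : ℕ, x = k * m + t * A} := by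
    ext x
    simp only [Set.mem_setOf_eq, hmem x]
  refine ⟨⟨?_, ?_⟩, ?_⟩
  · show b ^ ((b + 1) * b ^ n) - 1 ∉ fermatSemigroup b n
    rw [hmem, ← hMA]
    exact hFnot
  · intro x hx
    simp only [Set.mem_setOf_eq, hmem] at hx
    by_contra hlt
    push_neg at hlt
    have hge : (m - 1) * (A - 1) ≤ x := by
      rw [hMA]
      have : 1 ≤ b ^ ((b + 1) * b ^ n) := Nat.one_le_pow _ _ (by omega)
      omega
    exact hx (hbig x hge)
  · rw [hset, hcount, hMA]
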